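/- Let F be a field of characteristic p, let G be a finite group, and let X : G → GL_s(F) be a function together with a function α : G × G → F^× such that X(g)X(h) = α(g,h)·X(gh) for all g,h ∈ G (so X is a projective representation of G; the case α ≡ 1 of an ordinary group representation is included). Assume that the F-linear span of {X(g) : g ∈ G} is all of M_s(F). Regard A = M_s(F) as a G-algebra via the (well-defined) conjugation action x^g = X(g)⁻¹ x X(g). Then there exists a p-subgroup V of G such that: (1) the identity matrix I_s lies in Tr_V^G(A^V); and (2) for every subgroup H ≤ G with I_s ∈ Tr_H^G(A^H), the subgroup V is contained in some G-conjugate of H. -/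

import Mathlib

set_option linter.unusedSectionVars false
set_option linter.unusedTactic false

/-- `s` is a complete set of representatives of the right cosets of `Q` in `S`. -/
def IsRightTransversal {D : Type*} [Group D] (Q S : Subgroup D) (s : Finset D) : Prop :=
  (↑s : Set D) ⊆ (S : Set D) ∧ ∀ d ∈ S, ∃! r : D, r ∈ s ∧ d * r⁻¹ ∈ Q

/-- The set of relative traces `Tr_Q^S(x) = Σ_i x^{g_i}` of `Q`-fixed elements `x`. -/
def relTraceSet {D A : Type*} [Group D] [AddCommMonoid A]
    (act : D → A → A) (Q S : Subgroup D) : Set A :=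
  {y | ∃ x : A, (∀ q ∈ Q, act q x = x) ∧
    ∃ s : Finset D, IsRightTransversal Q S s ∧ y = ∑ r ∈ s, act r x}


section Setup
variable {F : Type} [Field F] {G : Type} [Group G] [Fintype G] {s : ℕ}
local notation "A" => Matrix (Fin s) (Fin s) F
variable (X : G → (Matrix (Fin s) (Fin s) F)ˣ)

attribute [local instance] Classical.propDecidable

def pact (g : G) (x : A) : A := (↑((X g)⁻¹) : A) * x * (↑(X g) : A)


/-- `X` admits a factor set (up to nonzero scalars it is multiplicative). -/
def FactorSet (X : G → (Matrix (Fin s) (Fin s) F)ˣ) : Prop :=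
  ∀ g h : G, ∃ c : F, c ≠ 0 ∧ (↑(X g) : A) * (↑(X h) : A) = c • (↑(X (g * h)) : A)


variable (hX : FactorSet X)

include hX in
lemma pact_mul (g h : G) (x : A) : pact X (g * h) x = pact X h (pact X g x) := by
  obtain ⟨c, hc, hgh⟩ := hX g h
  have h2 : (↑(X (g*h)) : A) = c⁻¹ • ((↑(X g) : A) * (↑(X h) : A)) := by
    rw [hgh, smul_smul, inv_mul_cancel₀ hc, one_smul]
  have hinv : (↑((X (g*h))⁻¹) : A) = c • ((↑((X h)⁻¹) : A) * (↑((X g)⁻¹) : A)) := by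
    apply Units.inv_eq_of_mul_eq_one_right
    rw [h2, smul_mul_assoc, mul_smul_comm, smul_smul, inv_mul_cancel₀ hc, one_smul,
      mul_assoc, ← mul_assoc (↑(X h) : A), Units.mul_inv, one_mul, Units.mul_inv]
  simp only [pact, hinv, h2]
  rw [smul_mul_assoc, smul_mul_assoc, mul_smul_comm, smul_smul, mul_inv_cancel₀ hc, one_smul]
  noncomm_ring

include hX in
lemma pact_one (x : A) : pact X 1 x = x := by
  obtain ⟨c, hc, h11⟩ := hX 1 1
  rw [one_mul] at h11
  have h2 : (↑(X 1) : A) = c • (1 : A) := by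
    calc (↑(X 1) : A) = (↑((X 1)⁻¹) : A) * ((↑(X 1) : A) * (↑(X 1):A)) := by
          rw [← mul_assoc, Units.inv_mul, one_mul]
      _ = c • ((↑((X 1)⁻¹) : A) * (↑(X 1) : A)) := by rw [h11, mul_smul_comm]
      _ = c • (1 : A) := by rw [Units.inv_mul]
  have h3 : (↑((X 1)⁻¹) : A) = c⁻¹ • (1 : A) := by
    apply Units.inv_eq_of_mul_eq_one_right
    rw [h2, smul_mul_assoc, mul_smul_comm, smul_smul, one_mul, mul_inv_cancel₀ hc, one_smul]
  rw [pact, h2, h3, smul_mul_assoc, smul_mul_assoc, mul_smul_comm, smul_smul, one_mul, mul_one,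
    inv_mul_cancel₀ hc, one_smul]


def PFix (L : Subgroup G) (x : A) : Prop := ∀ g ∈ L, pact X g x = x

noncomputable def trq (L : Subgroup G) (x : A) : A :=
  ∑ c : G ⧸ L, pact X (Quotient.out c)⁻¹ x

def IsRAct (X : G → (Matrix (Fin s) (Fin s) F)ˣ) : Prop :=
  ∀ g h : G, ∀ x : Matrix (Fin s) (Fin s) F, pact X (g * h) x = pact X h (pact X g x)

variable (hXm : IsRAct X)

lemma pact_sum (g : G) {ι : Type*} (t : Finset ι) (φ : ι → A) :
    pact X g (∑ i ∈ t, φ i) = ∑ i ∈ t, pact X g (φ i) := by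
  simp [pact, Finset.mul_sum, Finset.sum_mul]

lemma pact_smul (g : G) (c : F) (x : A) : pact X g (c • x) = c • pact X g x := by
  simp [pact, mul_smul_comm, smul_mul_assoc]

include hXm in
lemma pact_coset {L : Subgroup G} {x : A} (hx : PFix X L x) {g₁ g₂ : G}
    (h : g₁ * g₂⁻¹ ∈ L) : pact X g₁ x = pact X g₂ x := by
  have e : g₁ = (g₁ * g₂⁻¹) * g₂ := by group
  rw [e, hXm _ _ _, hx _ h]

include hXm in
lemma pact_out {L : Subgroup G} {x : A} (hx : PFix X L x) {c : G ⧸ L} {g : G}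
    (h : QuotientGroup.mk g = c) : pact X (Quotient.out c)⁻¹ x = pact X g⁻¹ x := by
  apply pact_coset X hXm hx
  rw [inv_inv]
  have h2 : (QuotientGroup.mk g : G ⧸ L) = QuotientGroup.mk (Quotient.out c) := by
    rw [h, QuotientGroup.out_eq' c]
  have h3 : g⁻¹ * Quotient.out c ∈ L := QuotientGroup.eq.mp h2
  simpa [mul_inv_rev] using L.inv_mem h3

lemma sum_quot_smul {D : Type*} [Group D] [Fintype D] {L : Subgroup D} {M : Type*}
    [AddCommMonoid M] (φ : D ⧸ L → M) (g : D) :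
    ∑ c : D ⧸ L, φ (g • c) = ∑ c : D ⧸ L, φ c :=
  Equiv.sum_comp (MulAction.toPerm g) φ

include hXm in
lemma trq_fix {L : Subgroup G} {x : A} (hx : PFix X L x) (g : G) :
    pact X g (trq X L x) = trq X L x := by
  rw [trq, pact_sum]
  have step : ∀ c : G ⧸ L,
      pact X g (pact X (Quotient.out c)⁻¹ x) = pact X (Quotient.out (g⁻¹ • c))⁻¹ x := by
    intro c
    rw [← hXm _ _ _]
    have h1 : (QuotientGroup.mk (g⁻¹ * Quotient.out c) : G ⧸ L) = g⁻¹ • c := by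
      rw [← smul_eq_mul, ← MulAction.Quotient.smul_mk, QuotientGroup.out_eq']
    have h2 := pact_out X hXm hx h1
    rw [h2, mul_inv_rev, inv_inv]
  calc ∑ c : G ⧸ L, pact X g (pact X (Quotient.out c)⁻¹ x)
      = ∑ c : G ⧸ L, pact X (Quotient.out (g⁻¹ • c))⁻¹ x := by
        exact Finset.sum_congr rfl (fun c _ => step c)
    _ = ∑ c : G ⧸ L, pact X (Quotient.out c)⁻¹ x :=
        sum_quot_smul (L := L) (fun c => pact X (Quotient.out c)⁻¹ x) g⁻¹
    _ = trq X L x := rfl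

lemma trq_smul (L : Subgroup G) (c : F) (x : A) : trq X L (c • x) = c • trq X L x := by
  simp [trq, pact_smul, Finset.smul_sum]

noncomputable def ctrans (L : Subgroup G) : Finset G :=
  Finset.image (fun c : G ⧸ L => (Quotient.out c)⁻¹) Finset.univ

lemma ctrans_isRT (L : Subgroup G) : IsRightTransversal L ⊤ (ctrans (G := G) L) := by
  constructor
  · intro r _; trivial
  · intro d _
    refine ⟨(Quotient.out (QuotientGroup.mk (s := L) d⁻¹))⁻¹, ⟨?_, ?_⟩, ?_⟩
    · exact Finset.mem_image_of_mem _ (Finset.mem_univ _)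
    · rw [inv_inv]
      simpa using QuotientGroup.eq.mp (QuotientGroup.out_eq' (QuotientGroup.mk (s := L) d⁻¹)).symm
    · rintro r ⟨hr, hdr⟩
      rw [ctrans] at hr
      obtain ⟨c, -, rfl⟩ := Finset.mem_image.mp hr
      rw [inv_inv] at hdr
      have : (QuotientGroup.mk (s := L) d⁻¹) = c := by
        rw [← QuotientGroup.out_eq' c]
        exact QuotientGroup.eq.mpr (by simpa using hdr)
      rw [this]

include hXm in
lemma sum_transversal {L : Subgroup G} {x : A} (hx : PFix X L x) {t : Finset G}
    (ht : IsRightTransversal L ⊤ t) : ∑ r ∈ t, pact X r x = trq X L x := by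
  rw [trq]
  refine Finset.sum_bij (fun r _ => QuotientGroup.mk (s := L) r⁻¹) (fun a ha => Finset.mem_univ _)
    ?_ ?_ ?_
  · intro r₁ h₁ r₂ h₂ hq
    have hm : r₁ * r₂⁻¹ ∈ L := by
      simpa using QuotientGroup.eq.mp hq
    obtain ⟨r₀, hr₀, huniq⟩ := ht.2 r₁ trivial
    have e1 : r₁ = r₀ := huniq r₁ ⟨h₁, by simpa using L.one_mem⟩
    have e2 : r₂ = r₀ := huniq r₂ ⟨h₂, hm⟩
    rw [e1, e2]
  · intro c _
    obtain ⟨r, ⟨hrt, hrL⟩, -⟩ := ht.2 (Quotient.out c)⁻¹ trivial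
    refine ⟨r, hrt, ?_⟩
    rw [← QuotientGroup.out_eq' c]
    apply QuotientGroup.eq.mpr
    simpa [mul_inv_rev] using L.inv_mem hrL
  · intro r hr
    have h0 := pact_out X hXm hx (c := QuotientGroup.mk (s := L) r⁻¹) (g := r⁻¹) rfl
    rw [inv_inv] at h0
    exact h0.symm

include hXm in
lemma mem_relTraceSet_iff {L : Subgroup G} {y : A} :
    y ∈ relTraceSet (pact X) L ⊤ ↔ ∃ x : A, PFix X L x ∧ y = trq X L x := by
  constructor
  · rintro ⟨x, hfix, t, ht, rfl⟩
    exact ⟨x, hfix, sum_transversal X hXm hfix ht⟩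
  · rintro ⟨x, hfix, rfl⟩
    refine ⟨x, hfix, ctrans L, ctrans_isRT L, ?_⟩
    rw [trq, ctrans]
    exact (Finset.sum_image (f := fun r => pact X r x)
      (g := fun c : G ⧸ L => (Quotient.out c)⁻¹) (s := Finset.univ)
      (fun a _ b _ h => Quotient.out_injective (inv_injective h))).symm

include hXm in
lemma pact_out_mul {L : Subgroup G} {x : A} (hx : PFix X L x) (t : G) (c : G ⧸ L) :
    pact X (Quotient.out (t⁻¹ • c))⁻¹ x = pact X ((Quotient.out c)⁻¹ * t) x := by
  have h1 : (QuotientGroup.mk (t⁻¹ * Quotient.out c) : G ⧸ L) = t⁻¹ • c := by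
    rw [← smul_eq_mul, ← MulAction.Quotient.smul_mk, QuotientGroup.out_eq']
  rw [pact_out X hXm hx h1, mul_inv_rev, inv_inv]

lemma trq_sum (L : Subgroup G) {ι : Type*} (t : Finset ι) (φ : ι → A) :
    trq X L (∑ i ∈ t, φ i) = ∑ i ∈ t, trq X L (φ i) := by
  simp only [trq, pact_sum]
  exact Finset.sum_comm

noncomputable def trqRel (K : Subgroup G) (M : Subgroup ↥K) (x : A) : A :=
  ∑ c : ↥K ⧸ M, pact X (((Quotient.out c : ↥K) : G))⁻¹ x

include hXm in
lemma pact_outK {K : Subgroup G} {M : Subgroup ↥K} {x : A}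
    (hx : PFix X (Subgroup.map K.subtype M) x) {c : ↥K ⧸ M} {k : ↥K}
    (h : QuotientGroup.mk k = c) :
    pact X ((Quotient.out c : ↥K) : G)⁻¹ x = pact X ((k : G))⁻¹ x := by
  apply pact_coset X hXm hx
  have h2 : (QuotientGroup.mk k : ↥K ⧸ M) = QuotientGroup.mk (Quotient.out c) := by
    rw [h, QuotientGroup.out_eq' c]
  have h3 : k⁻¹ * Quotient.out c ∈ M := QuotientGroup.eq.mp h2
  have h4 : (Quotient.out c)⁻¹ * k ∈ M := by simpa [mul_inv_rev] using M.inv_mem h3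
  refine ⟨(Quotient.out c)⁻¹ * k, h4, ?_⟩
  push_cast
  rw [inv_inv]
  rfl

include hXm in
lemma trq_comp {K : Subgroup G} (M : Subgroup ↥K) {x : A}
    (hx : PFix X (Subgroup.map K.subtype M) x) :
    trq X (Subgroup.map K.subtype M) x = trq X K (trqRel X K M x) := by
  have hcalc : trq X K (trqRel X K M x)
      = ∑ d : G ⧸ K, ∑ c : ↥K ⧸ M,
          pact X ((Quotient.out d) * ((Quotient.out c : ↥K) : G))⁻¹ x := by
    rw [trq, trqRel]
    refine Finset.sum_congr rfl (fun d _ => ?_)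
    rw [pact_sum]
    refine Finset.sum_congr rfl (fun c _ => ?_)
    rw [← hXm _ _ _, mul_inv_rev]
  have hb : Function.Bijective
      (fun y : (G ⧸ K) × (↥K ⧸ M) =>
        (QuotientGroup.mk ((Quotient.out y.1) * ((Quotient.out y.2 : ↥K) : G))
          : G ⧸ Subgroup.map K.subtype M)) := by
    constructor
    · rintro ⟨d₁, c₁⟩ ⟨d₂, c₂⟩ hz
      simp only at hz
      have h1 : (Quotient.out d₁ * ((Quotient.out c₁ : ↥K) : G))⁻¹
          * (Quotient.out d₂ * ((Quotient.out c₂ : ↥K) : G)) ∈ Subgroup.map K.subtype M :=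
        QuotientGroup.eq.mp hz
      have h1K := Subgroup.map_subtype_le M h1
      have hdK : (Quotient.out d₁)⁻¹ * Quotient.out d₂ ∈ K := by
        have h5 := K.mul_mem (K.mul_mem (Quotient.out c₁).2 h1K) (K.inv_mem (Quotient.out c₂).2)
        have e : ((Quotient.out c₁ : ↥K) : G) * ((Quotient.out d₁ * ((Quotient.out c₁ : ↥K) : G))⁻¹
            * (Quotient.out d₂ * ((Quotient.out c₂ : ↥K) : G))) * ((Quotient.out c₂ : ↥K) : G)⁻¹
            = (Quotient.out d₁)⁻¹ * Quotient.out d₂ := by group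
        rwa [e] at h5
      have hd : d₁ = d₂ := by
        rw [← QuotientGroup.out_eq' d₁, ← QuotientGroup.out_eq' d₂]
        exact QuotientGroup.eq.mpr hdK
      subst hd
      have h2 : ((Quotient.out c₁ : ↥K) : G)⁻¹ * ((Quotient.out c₂ : ↥K) : G)
          ∈ Subgroup.map K.subtype M := by
        have e : (Quotient.out d₁ * ((Quotient.out c₁ : ↥K) : G))⁻¹
            * (Quotient.out d₁ * ((Quotient.out c₂ : ↥K) : G))
            = ((Quotient.out c₁ : ↥K) : G)⁻¹ * ((Quotient.out c₂ : ↥K) : G) := by group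
        rwa [e] at h1
      obtain ⟨m, hm, hms⟩ := h2
      have hmm : (Quotient.out c₁)⁻¹ * Quotient.out c₂ ∈ M := by
        have : m = (Quotient.out c₁)⁻¹ * Quotient.out c₂ := Subtype.ext (by push_cast; exact hms)
        rwa [← this]
      have hc : c₁ = c₂ := by
        rw [← QuotientGroup.out_eq' c₁, ← QuotientGroup.out_eq' c₂]
        exact QuotientGroup.eq.mpr hmm
      rw [hc]
    · intro e
      have hgK : (Quotient.out (QuotientGroup.mk (s := K) (Quotient.out e)))⁻¹
          * (Quotient.out e) ∈ K := by
        have := (QuotientGroup.out_eq' (QuotientGroup.mk (s := K) (Quotient.out e)))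
        exact QuotientGroup.eq.mp this
      set d := QuotientGroup.mk (s := K) (Quotient.out e) with hd
      set k : ↥K := ⟨(Quotient.out d)⁻¹ * Quotient.out e, hgK⟩ with hk
      set c := QuotientGroup.mk (s := M) k with hc
      refine ⟨(d, c), ?_⟩
      have hm : k⁻¹ * Quotient.out c ∈ M := QuotientGroup.eq.mp (QuotientGroup.out_eq' c).symm
      have hmL : ((k⁻¹ * Quotient.out c : ↥K) : G) ∈ Subgroup.map K.subtype M :=
        Subgroup.mem_map_of_mem K.subtype hm
      have key : Quotient.out d * ((Quotient.out c : ↥K) : G)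
          = Quotient.out e * ((k⁻¹ * Quotient.out c : ↥K) : G) := by
        simp only [hk]
        push_cast
        group
      simp only
      rw [key, ← QuotientGroup.out_eq' e]
      apply QuotientGroup.eq.mpr
      simpa [mul_inv_rev, mul_assoc] using (Subgroup.map K.subtype M).inv_mem hmL
  calc trq X (Subgroup.map K.subtype M) x
      = ∑ y : (G ⧸ K) × (↥K ⧸ M),
          pact X ((Quotient.out y.1) * ((Quotient.out y.2 : ↥K) : G))⁻¹ x := by
        rw [trq]
        exact (Fintype.sum_bijective _ hb _ _ (fun y => (pact_out X hXm hx rfl).symm)).symm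
    _ = ∑ d : G ⧸ K, ∑ c : ↥K ⧸ M,
          pact X ((Quotient.out d) * ((Quotient.out c : ↥K) : G))⁻¹ x :=
        Fintype.sum_prod_type _
    _ = trq X K (trqRel X K M x) := hcalc.symm

lemma pact_mulmul (g : G) (x y : A) : pact X g (x * y) = pact X g x * pact X g y := by
  simp only [pact, mul_assoc, Units.mul_inv_cancel_left]

lemma pact_one' (g : G) : pact X g (1 : A) = 1 := by
  rw [pact, mul_one, Units.inv_mul]

include hXm in
lemma trq_mul {H K : Subgroup G} {a : A} (b : A) (ha : PFix X H a) :
    trq X H a * trq X K b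
      = trq X K (∑ c : G ⧸ H, pact X (Quotient.out c)⁻¹ a * b) := by
  have hR : trq X K (∑ c : G ⧸ H, pact X (Quotient.out c)⁻¹ a * b)
      = ∑ d : G ⧸ K, ∑ c : G ⧸ H,
          pact X ((Quotient.out c)⁻¹ * (Quotient.out d)⁻¹) a * pact X (Quotient.out d)⁻¹ b := by
    rw [trq]
    refine Finset.sum_congr rfl (fun d _ => ?_)
    rw [pact_sum]
    refine Finset.sum_congr rfl (fun c _ => ?_)
    rw [pact_mulmul, ← hXm _ _ _]
  rw [hR, trq, trq, Finset.sum_mul_sum, Finset.sum_comm]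
  refine Finset.sum_congr rfl (fun d _ => ?_)
  calc ∑ c : G ⧸ H, pact X (Quotient.out c)⁻¹ a * pact X (Quotient.out d)⁻¹ b
      = ∑ c : G ⧸ H, pact X (Quotient.out ((((Quotient.out d)⁻¹)⁻¹) • c))⁻¹ a
          * pact X (Quotient.out d)⁻¹ b :=
        (sum_quot_smul
          (fun c => pact X (Quotient.out c)⁻¹ a * pact X (Quotient.out d)⁻¹ b)
          (((Quotient.out d)⁻¹)⁻¹)).symm
    _ = ∑ c : G ⧸ H, pact X ((Quotient.out c)⁻¹ * (Quotient.out d)⁻¹) a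
          * pact X (Quotient.out d)⁻¹ b := by
        refine Finset.sum_congr rfl (fun c _ => ?_)
        rw [pact_out_mul X hXm ha ((Quotient.out d)⁻¹) c]

set_option maxHeartbeats 1000000 in
include hXm in
lemma mackey (h10 : (1 : A) ≠ 0)
    (hsc : ∀ x : A, (∀ g : G, pact X g x = x) → ∃ c : F, x = c • (1 : A))
    {H K : Subgroup G} {a b : A}
    (ha : PFix X H a) (hb : PFix X K b) (hta : trq X H a = 1) (htb : trq X K b = 1) :
    ∃ (x : G) (M : Subgroup ↥K),
      (∀ g ∈ Subgroup.map K.subtype M, x⁻¹ * g * x ∈ H) ∧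
      ∃ w : A, PFix X (Subgroup.map K.subtype M) w
        ∧ trq X (Subgroup.map K.subtype M) w = 1 := by
  classical
  set f : G ⧸ H → A := fun c => pact X (Quotient.out c)⁻¹ a * b with hf
  have hfe : ∀ (k : ↥K) (c : G ⧸ H), pact X (↑k) (f c) = f (k⁻¹ • c) := by
    intro k c
    rw [hf]
    simp only
    rw [pact_mulmul, hb _ k.2, ← hXm _ _ _,
      show (k⁻¹ • c) = ((k : G))⁻¹ • c from rfl, pact_out_mul X hXm ha (k : G) c]
  set z : A := ∑ c : G ⧸ H, f c with hz
  have h1 : trq X K z = 1 := by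
    rw [hz, ← trq_mul X hXm b ha, hta, htb, one_mul]
  set Ω := MulAction.orbitRel.Quotient ↥K (G ⧸ H) with hΩ
  set Φ : (Σ ω : Ω, ↥K ⧸ MulAction.stabilizer ↥K ω.out) → G ⧸ H :=
    fun y => (Quotient.out y.2) • y.1.out with hΦ
  have hΦbij : Function.Bijective Φ := by
    constructor
    · rintro ⟨ω₁, q₁⟩ ⟨ω₂, q₂⟩ h
      simp only [hΦ] at h
      have hω : ω₁ = ω₂ := by
        rw [← Quotient.out_eq' ω₁, ← Quotient.out_eq' ω₂]
        apply Quotient.sound'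
        rw [MulAction.orbitRel_apply, MulAction.mem_orbit_iff]
        refine ⟨(Quotient.out q₁)⁻¹ * Quotient.out q₂, ?_⟩
        rw [mul_smul, ← h, inv_smul_smul]
      subst hω
      have hst : (Quotient.out q₁)⁻¹ * Quotient.out q₂ ∈ MulAction.stabilizer ↥K ω₁.out := by
        rw [MulAction.mem_stabilizer_iff, mul_smul, ← h, inv_smul_smul]
      have hq : q₁ = q₂ := by
        rw [← QuotientGroup.out_eq' q₁, ← QuotientGroup.out_eq' q₂]
        exact QuotientGroup.eq.mpr hst
      rw [hq]
    · intro c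
      set ω : Ω := Quotient.mk'' c with hω
      have hrel : (MulAction.orbitRel ↥K (G ⧸ H)).r ω.out c :=
        Quotient.exact' (by rw [Quotient.out_eq', hω])
      rw [MulAction.orbitRel_apply, MulAction.mem_orbit_iff] at hrel
      obtain ⟨k, hk⟩ := hrel
      refine ⟨⟨ω, QuotientGroup.mk (s := MulAction.stabilizer ↥K ω.out) k⁻¹⟩, ?_⟩
      simp only [hΦ]
      set q := QuotientGroup.mk (s := MulAction.stabilizer ↥K ω.out) k⁻¹ with hq
      have hm : k⁻¹⁻¹ * Quotient.out q ∈ MulAction.stabilizer ↥K ω.out :=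
        QuotientGroup.eq.mp (QuotientGroup.out_eq' q).symm
      rw [inv_inv, MulAction.mem_stabilizer_iff] at hm
      have hout : Quotient.out q = k⁻¹ * (k * Quotient.out q) := by group
      rw [hout, mul_smul, hm, ← hk, inv_smul_smul]
  have hdecomp : z = ∑ ω : Ω,
      trqRel X K (MulAction.stabilizer ↥K ω.out) (f ω.out) := by
    calc z = ∑ y : (Σ ω : Ω, ↥K ⧸ MulAction.stabilizer ↥K ω.out), f (Φ y) := by
          rw [hz]
          exact (Fintype.sum_bijective Φ hΦbij _ _ (fun y => rfl)).symm
      _ = ∑ ω : Ω, ∑ q : ↥K ⧸ MulAction.stabilizer ↥K ω.out, f (Φ ⟨ω, q⟩) := by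
          rw [← Finset.univ_sigma_univ, Finset.sum_sigma]
      _ = ∑ ω : Ω, trqRel X K (MulAction.stabilizer ↥K ω.out) (f ω.out) := by
          refine Finset.sum_congr rfl (fun ω _ => ?_)
          rw [trqRel]
          refine Finset.sum_congr (by congr!) (fun q _ => ?_)
          have h5 := hfe (Quotient.out q)⁻¹ (ω.out)
          rw [inv_inv] at h5
          simp only [hΦ]
          exact h5.symm
  have hfixω : ∀ ω : Ω,
      PFix X (Subgroup.map K.subtype (MulAction.stabilizer ↥K ω.out)) (f ω.out) := by
    intro ω g hg
    obtain ⟨m, hm, rfl⟩ := hg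
    have hminv : m⁻¹ ∈ MulAction.stabilizer ↥K ω.out :=
      (MulAction.stabilizer ↥K ω.out).inv_mem hm
    rw [MulAction.mem_stabilizer_iff] at hminv
    have h5 := hfe m ω.out
    simp only [Subgroup.coe_subtype]
    rw [h5, hminv]
  have h2 : ∑ ω : Ω, trq X (Subgroup.map K.subtype (MulAction.stabilizer ↥K ω.out))
      (f ω.out) = 1 := by
    calc ∑ ω : Ω, trq X (Subgroup.map K.subtype (MulAction.stabilizer ↥K ω.out)) (f ω.out)
        = ∑ ω : Ω, trq X K (trqRel X K (MulAction.stabilizer ↥K ω.out) (f ω.out)) :=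
          Finset.sum_congr rfl (fun ω _ => trq_comp X hXm _ (hfixω ω))
      _ = trq X K (∑ ω : Ω, trqRel X K (MulAction.stabilizer ↥K ω.out) (f ω.out)) :=
          (trq_sum X K _ _).symm
      _ = trq X K z := by rw [← hdecomp]
      _ = 1 := h1
  have hscal : ∀ ω : Ω, ∃ cc : F,
      trq X (Subgroup.map K.subtype (MulAction.stabilizer ↥K ω.out)) (f ω.out) = cc • 1 :=
    fun ω => hsc _ (fun g => trq_fix X hXm (hfixω ω) g)
  choose cs hcs using hscal
  have hex : ∃ ω : Ω, cs ω ≠ 0 := by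
    by_contra hcon
    push_neg at hcon
    rw [Finset.sum_congr rfl (fun ω _ => by rw [hcs ω, hcon ω, zero_smul])] at h2
    rw [Finset.sum_const, smul_zero] at h2
    exact h10 h2.symm
  obtain ⟨ω, hω⟩ := hex
  refine ⟨Quotient.out ω.out, MulAction.stabilizer ↥K ω.out, ?_, (cs ω)⁻¹ • f ω.out, ?_, ?_⟩
  · intro g hg
    obtain ⟨m, hm, rfl⟩ := hg
    have hminv : m⁻¹ ∈ MulAction.stabilizer ↥K ω.out :=
      (MulAction.stabilizer ↥K ω.out).inv_mem hm
    rw [MulAction.mem_stabilizer_iff] at hminv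
    have h3 : ((m⁻¹ : ↥K) : G) • ω.out = ω.out := hminv
    rw [← QuotientGroup.out_eq' ω.out] at h3
    rw [MulAction.Quotient.smul_mk] at h3
    have h4 := QuotientGroup.eq.mp h3
    simp only [smul_eq_mul] at h4
    have h7 : (((m⁻¹ : ↥K) : G) * Quotient.out ω.out)⁻¹ * Quotient.out ω.out
        = (Quotient.out ω.out)⁻¹ * (m : G) * Quotient.out ω.out := by
      push_cast
      group
    rwa [h7] at h4
  · intro g hg
    rw [pact_smul, hfixω ω g hg]
  · rw [trq_smul, hcs ω, smul_smul, inv_mul_cancel₀ hω, one_smul]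

omit hXm in
lemma fixed_scalar
    (hspan : Submodule.span F (Set.range fun g : G => (↑(X g) : A)) = ⊤)
    {x : A} (hx : ∀ g : G, pact X g x = x) : ∃ c : F, x = c • (1 : A) := by
  classical
  have hcomm : ∀ y : A, y * x = x * y := by
    intro y
    have hy : y ∈ Submodule.span F (Set.range fun g : G => (↑(X g) : A)) := by
      rw [hspan]; trivial
    induction hy using Submodule.span_induction with
    | mem y hy =>
      obtain ⟨g, rfl⟩ := hy
      have h1 := hx g
      rw [pact] at h1
      have h2 : (↑(X g) : A) * ((↑((X g)⁻¹) : A) * x * (↑(X g) : A))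
          = (↑(X g) : A) * x := congrArg ((↑(X g) : A) * ·) h1
      rw [← mul_assoc, ← mul_assoc, Units.mul_inv, one_mul] at h2
      exact h2.symm
    | zero => simp
    | add y z hy hz ihy ihz => rw [add_mul, mul_add, ihy, ihz]
    | smul c y hy ih => rw [smul_mul_assoc, mul_smul_comm, ih]
  have hcentral : x ∈ Set.range ⇑(Matrix.scalar (Fin s)) :=
    Matrix.mem_range_scalar_iff_commute_single'.mpr (fun i j => hcomm _)
  obtain ⟨c, hc⟩ := hcentral
  refine ⟨c, ?_⟩
  rw [← hc, Matrix.scalar_apply, ← Matrix.smul_one_eq_diagonal]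

end Setup

/-- Let `F` be a field of characteristic `p`, `G` a finite group and
`X : G → GL_s(F)` a projective representation with factor set `α` whose image spans `M_s(F)`.
Regard `A = M_s(F)` as a `G`-algebra via `x^g = X(g)⁻¹ x X(g)`.  Then there is a `p`-subgroup
`V ≤ G` such that (1) `I_s ∈ Tr_V^G(A^V)`, and (2) every subgroup `H ≤ G` with
`I_s ∈ Tr_H^G(A^H)` admits a `G`-conjugate containing `V`. -/
theorem stmt_9 (p : ℕ) (hp : p.Prime) (F : Type) [Field F] [CharP F p]
    (G : Type) [Group G] [Fintype G]
    (s : ℕ) (X : G → (Matrix (Fin s) (Fin s) F)ˣ) (α : G → G → Fˣ)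
    (hX : ∀ g h : G,
      (↑(X g) : Matrix (Fin s) (Fin s) F) * (↑(X h) : Matrix (Fin s) (Fin s) F)
        = (↑(α g h) : F) • (↑(X (g * h)) : Matrix (Fin s) (Fin s) F))
    (hspan : Submodule.span F
        (Set.range fun g : G => (↑(X g) : Matrix (Fin s) (Fin s) F)) = ⊤) :
    ∃ V : Subgroup G, IsPGroup p V ∧
      (1 : Matrix (Fin s) (Fin s) F) ∈ relTraceSet
        (fun g x => (↑((X g)⁻¹) : Matrix (Fin s) (Fin s) F) * x
          * (↑(X g) : Matrix (Fin s) (Fin s) F)) V ⊤ ∧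
      ∀ H : Subgroup G,
        (1 : Matrix (Fin s) (Fin s) F) ∈ relTraceSet
          (fun g x => (↑((X g)⁻¹) : Matrix (Fin s) (Fin s) F) * x
            * (↑(X g) : Matrix (Fin s) (Fin s) F)) H ⊤ →
        ∃ g : G, V ≤ Subgroup.map (MulAut.conj g).toMonoidHom H := by
  classical
  haveI := Fact.mk hp
  have hFS : FactorSet X := fun g h => ⟨(α g h : F), Units.ne_zero _, hX g h⟩
  have hXm : IsRAct X := fun g h x => pact_mul X hFS g h x
  have hrw : (fun (g : G) (x : Matrix (Fin s) (Fin s) F) =>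
      (↑((X g)⁻¹) : Matrix (Fin s) (Fin s) F) * x
        * (↑(X g) : Matrix (Fin s) (Fin s) F)) = pact X := rfl
  rw [hrw]
  by_cases h10 : (1 : Matrix (Fin s) (Fin s) F) = 0
  · haveI : Subsingleton (Matrix (Fin s) (Fin s) F) :=
      subsingleton_of_zero_eq_one h10.symm
    refine ⟨⊥, IsPGroup.of_bot, ⟨1, fun q hq => ?_, Finset.univ, ⟨fun _ _ => trivial,
      fun d _ => ⟨d, ⟨Finset.mem_univ d, by simp⟩, ?_⟩⟩, Subsingleton.elim _ _⟩,
      fun H _ => ⟨1, bot_le⟩⟩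
    · rw [Subgroup.mem_bot] at hq
      rw [hq, pact_one X hFS]
    · rintro r ⟨-, hr⟩
      rw [Subgroup.mem_bot, mul_inv_eq_one] at hr
      exact hr.symm
  · set D : Subgroup G → Prop := fun L => ∃ w, PFix X L w ∧ trq X L w = 1 with hD
    obtain ⟨P⟩ : Nonempty (Sylow p G) := Sylow.nonempty
    have hPD : D (P : Subgroup G) := by
      set cP : F := (((P : Subgroup G).index : F))⁻¹ with hcP
      have hne : (((P : Subgroup G).index : ℕ) : F) ≠ 0 := by
        rw [Ne, CharP.cast_eq_zero_iff F p]
        exact P.not_dvd_index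
      refine ⟨cP • 1, fun g hg => ?_, ?_⟩
      · rw [pact_smul, pact_one']
      · rw [trq]
        have hterm : ∀ c : G ⧸ (P : Subgroup G),
            pact X (Quotient.out c)⁻¹ (cP • (1 : Matrix (Fin s) (Fin s) F)) = cP • 1 :=
          fun c => by rw [pact_smul, pact_one']
        rw [Finset.sum_congr rfl (fun c _ => hterm c), Finset.sum_const]
        rw [← Nat.cast_smul_eq_nsmul F, smul_smul]
        have hcard : (Finset.univ : Finset (G ⧸ (P : Subgroup G))).card
            = (P : Subgroup G).index := by
          rw [Finset.card_univ, Subgroup.index_eq_card, Nat.card_eq_fintype_card]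
        rw [hcard, hcP, mul_inv_cancel₀ hne, one_smul]
    have hsc : ∀ x : Matrix (Fin s) (Fin s) F,
        (∀ g : G, pact X g x = x) → ∃ c : F, x = c • 1 :=
      fun x hx => fixed_scalar X hspan hx
    have hne : {n : ℕ | ∃ L : Subgroup G, D L ∧ Nat.card ↥L = n}.Nonempty :=
      ⟨_, (P : Subgroup G), hPD, rfl⟩
    obtain ⟨V, hVD, hVcard⟩ : ∃ V : Subgroup G, D V ∧ Nat.card ↥V
        = sInf {n : ℕ | ∃ L : Subgroup G, D L ∧ Nat.card ↥L = n} := Nat.sInf_mem hne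
    have hmin : ∀ L : Subgroup G, D L → Nat.card ↥V ≤ Nat.card ↥L := by
      intro L hL
      rw [hVcard]
      exact Nat.sInf_le ⟨L, hL, rfl⟩
    have key : ∀ H' : Subgroup G, D H' →
        ∃ g : G, V ≤ Subgroup.map (MulAut.conj g).toMonoidHom H' := by
      rintro H' ⟨a, ha, hta⟩
      obtain ⟨b, hbfix, hbtr⟩ := hVD
      obtain ⟨x, M, hconj, w, hwfix, hwtr⟩ :=
        mackey X hXm h10 hsc ha hbfix hta hbtr
      have hLD : D (Subgroup.map V.subtype M) := ⟨w, hwfix, hwtr⟩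
      have hle : Subgroup.map V.subtype M ≤ V := Subgroup.map_subtype_le M
      have hEq : Subgroup.map V.subtype M = V := by
        have hcard := hmin _ hLD
        have e1 : Nat.card ↥V = ((V : Subgroup G) : Set G).ncard :=
          Nat.card_coe_set_eq _
        have e2 : Nat.card ↥(Subgroup.map V.subtype M)
            = ((Subgroup.map V.subtype M : Subgroup G) : Set G).ncard :=
          Nat.card_coe_set_eq _
        rw [e1, e2] at hcard
        exact SetLike.coe_injective
          (Set.eq_of_subset_of_ncard_le hle hcard ((V : Set G).toFinite))
      refine ⟨x, fun v hv => ?_⟩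
      rw [← hEq] at hv
      refine ⟨x⁻¹ * v * x, hconj _ hv, ?_⟩
      simp only [MulEquiv.toMonoidHom_eq_coe, MonoidHom.coe_coe, MulAut.conj_apply]
      group
    refine ⟨V, ?_, ?_, ?_⟩
    · obtain ⟨g, hg⟩ := key (P : Subgroup G) hPD
      exact IsPGroup.to_le (P.isPGroup'.map _) hg
    · obtain ⟨b, hbfix, hbtr⟩ := hVD
      exact (mem_relTraceSet_iff X hXm).mpr ⟨b, hbfix, hbtr.symm⟩
    · intro H hH
      obtain ⟨xx, hfix, htr⟩ := (mem_relTraceSet_iff X hXm).mp hH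
      exact key H ⟨xx, hfix, htr.symm⟩
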